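/- For every real $\rho$ with $0<\rho<1$ and every integer $n\ge 2\rho+1$, one has $\Gamma(n+1)/\Gamma(n-\rho+1) < e^{1/12}\,n^{\rho}\,\sqrt{1+\rho}$, and consequently with $i=2$, $\Gamma(n+1)/(\Gamma(i)\,\Gamma(n-\rho+1)) < e^{1/12+\rho/2+1}\,(n/i)^{\rho}$. -/

import Mathlib

/-- For every real `ρ` with `0 < ρ < 1` and every integer `n ≥ 2ρ+1`:
`Γ(n+1)/Γ(n-ρ+1) < e^(1/12) n^ρ √(1+ρ)`, and consequently, with `i = 2`,
`Γ(n+1)/(Γ(i) Γ(n-ρ+1)) < e^(1/12+ρ/2+1) (n/i)^ρ`. -/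
theorem stmt_12 (ρ : ℝ) (h0 : 0 < ρ) (h1 : ρ < 1) (n : ℕ) (hn : 2 * ρ + 1 ≤ (n : ℝ)) :
    Real.Gamma ((n : ℝ) + 1) / Real.Gamma ((n : ℝ) - ρ + 1) <
        Real.exp (1/12) * (n : ℝ) ^ ρ * Real.sqrt (1 + ρ) ∧
    Real.Gamma ((n : ℝ) + 1) / (Real.Gamma 2 * Real.Gamma ((n : ℝ) - ρ + 1)) <
        Real.exp (1/12 + ρ/2 + 1) * ((n : ℝ) / 2) ^ ρ := by
  have hn2 : (2 : ℝ) ≤ (n : ℝ) := by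
    have : (1 : ℝ) < (n : ℝ) := by linarith
    exact_mod_cast Nat.succ_le_of_lt (by exact_mod_cast this)
  have hnpos : (0 : ℝ) < (n : ℝ) := by linarith
  set x : ℝ := (n : ℝ) - ρ + 1 with hxdef
  have hx : 0 < x := by simp only [hxdef]; linarith
  have hGx : 0 < Real.Gamma x := Real.Gamma_pos_of_pos hx
  -- log-convexity step : Γ(n+1) ≤ x^ρ * Γ(x)
  have key : Real.Gamma ((n : ℝ) + 1) ≤ x ^ ρ * Real.Gamma x := by
    have h := Real.Gamma_mul_add_mul_le_rpow_Gamma_mul_rpow_Gamma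
      (s := x) (t := x + 1) (a := 1 - ρ) (b := ρ) hx (by linarith) (by linarith) h0
      (by ring)
    have harg : (1 - ρ) * x + ρ * (x + 1) = (n : ℝ) + 1 := by simp only [hxdef]; ring
    rw [harg, Real.Gamma_add_one hx.ne'] at h
    calc Real.Gamma ((n : ℝ) + 1)
        ≤ Real.Gamma x ^ (1 - ρ) * (x * Real.Gamma x) ^ ρ := h
      _ = x ^ ρ * Real.Gamma x := by
          rw [Real.mul_rpow hx.le hGx.le, mul_comm (Real.Gamma x ^ (1 - ρ)),
            mul_assoc, ← Real.rpow_add hGx]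
          norm_num
  -- bound x^ρ < e^(1/12) * n^ρ * √(1+ρ)
  have hlog : ρ / (1 + ρ) ≤ Real.log (1 + ρ) := by
    have := Real.one_sub_inv_le_log_of_pos (x := 1 + ρ) (by linarith)
    have h1ρ : (0:ℝ) < 1 + ρ := by linarith
    calc ρ / (1 + ρ) = 1 - (1 + ρ)⁻¹ := by field_simp; ring
      _ ≤ Real.log (1 + ρ) := this
  have hsqrt : Real.sqrt (1 + ρ) = Real.exp (Real.log (1 + ρ) / 2) := by
    rw [Real.sqrt_eq_rpow, Real.rpow_def_of_pos (by linarith)]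
    ring_nf
  have hxlt : x < (n : ℝ) * Real.exp ((1 - ρ) / n) := by
    have hne : (1 - ρ) / n ≠ 0 := ne_of_gt (div_pos (by linarith) hnpos)
    have := Real.add_one_lt_exp hne
    have hx' : x = (n : ℝ) * ((1 - ρ) / n + 1) := by
      field_simp [hxdef]; ring
    rw [hx']
    exact mul_lt_mul_of_pos_left this hnpos
  have hbound : x ^ ρ < Real.exp (1/12) * (n : ℝ) ^ ρ * Real.sqrt (1 + ρ) := by
    have step1 : x ^ ρ < ((n : ℝ) * Real.exp ((1 - ρ) / n)) ^ ρ :=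
      Real.rpow_lt_rpow hx.le hxlt h0
    have step2 : ((n : ℝ) * Real.exp ((1 - ρ) / n)) ^ ρ
        = (n : ℝ) ^ ρ * Real.exp (ρ * ((1 - ρ) / n)) := by
      rw [Real.mul_rpow hnpos.le (Real.exp_pos _).le, ← Real.exp_mul, mul_comm ((1-ρ)/n)]
    have step3 : Real.exp (ρ * ((1 - ρ) / n)) ≤ Real.exp (1/12 + Real.log (1 + ρ) / 2) := by
      apply Real.exp_le_exp.2
      have hd : ρ * ((1 - ρ) / n) ≤ ρ * (1 - ρ) / 2 := by
        have ht : (1 - ρ) / n ≤ (1 - ρ) / 2 := by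
          gcongr <;> linarith
        calc ρ * ((1 - ρ) / n) ≤ ρ * ((1 - ρ) / 2) := by
              exact mul_le_mul_of_nonneg_left ht h0.le
          _ = ρ * (1 - ρ) / 2 := by ring
      have : ρ * (1 - ρ) / 2 ≤ 1/12 + Real.log (1 + ρ) / 2 := by
        have h1ρ : (0:ℝ) < 1 + ρ := by linarith
        have hq : ρ / (1 + ρ) * (1 + ρ) = ρ := div_mul_cancel₀ _ h1ρ.ne'
        have : ρ * (1 - ρ) / 2 ≤ 1/12 + (ρ / (1 + ρ)) / 2 := by
          nlinarith [hq, mul_pos h0 h1ρ, sq_nonneg ρ, mul_nonneg (mul_nonneg h0.le h0.le) h0.le]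
        linarith
      linarith
    calc x ^ ρ < (n : ℝ) ^ ρ * Real.exp (ρ * ((1 - ρ) / n)) := by rw [← step2]; exact step1
      _ ≤ (n : ℝ) ^ ρ * Real.exp (1/12 + Real.log (1 + ρ) / 2) :=
          mul_le_mul_of_nonneg_left step3 (Real.rpow_nonneg hnpos.le ρ)
      _ = Real.exp (1/12) * (n : ℝ) ^ ρ * Real.sqrt (1 + ρ) := by
          rw [hsqrt, Real.exp_add]; ring
  have main : Real.Gamma ((n : ℝ) + 1) / Real.Gamma x <
      Real.exp (1/12) * (n : ℝ) ^ ρ * Real.sqrt (1 + ρ) := by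
    rw [div_lt_iff₀ hGx]
    calc Real.Gamma ((n : ℝ) + 1) ≤ x ^ ρ * Real.Gamma x := key
      _ < (Real.exp (1/12) * (n : ℝ) ^ ρ * Real.sqrt (1 + ρ)) * Real.Gamma x :=
          mul_lt_mul_of_pos_right hbound hGx
  refine ⟨main, ?_⟩
  rw [Real.Gamma_two, one_mul]
  refine lt_of_lt_of_le main ?_
  -- e^(1/12) n^ρ √(1+ρ) ≤ e^(1/12+ρ/2+1) (n/2)^ρ
  have h2 : ((n : ℝ) / 2) ^ ρ = (n : ℝ) ^ ρ / (2 : ℝ) ^ ρ :=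
    Real.div_rpow hnpos.le (by norm_num : (0:ℝ) ≤ 2) ρ
  rw [h2]
  have h2ρ : (0:ℝ) < (2:ℝ) ^ ρ := Real.rpow_pos_of_pos (by norm_num) ρ
  rw [← mul_div_assoc, le_div_iff₀ h2ρ]
  have hlog2 : Real.log 2 ≤ 1 := by
    have := Real.log_le_sub_one_of_pos (x := 2) (by norm_num)
    linarith
  have hlogρ : Real.log (1 + ρ) ≤ ρ := by
    have := Real.log_le_sub_one_of_pos (x := 1 + ρ) (by linarith)
    linarith
  have h2rw : (2:ℝ) ^ ρ = Real.exp (ρ * Real.log 2) := by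
    rw [Real.rpow_def_of_pos (by norm_num), mul_comm]
  have hsq : Real.sqrt (1 + ρ) * (2:ℝ) ^ ρ ≤ Real.exp (ρ/2 + 1) := by
    rw [hsqrt, h2rw, ← Real.exp_add]
    apply Real.exp_le_exp.2
    nlinarith
  calc Real.exp (1/12) * (n : ℝ) ^ ρ * Real.sqrt (1 + ρ) * (2:ℝ) ^ ρ
      = Real.exp (1/12) * (n : ℝ) ^ ρ * (Real.sqrt (1 + ρ) * (2:ℝ) ^ ρ) := by ring
    _ ≤ Real.exp (1/12) * (n : ℝ) ^ ρ * Real.exp (ρ/2 + 1) := by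
        apply mul_le_mul_of_nonneg_left hsq
        positivity
    _ = Real.exp (1/12 + ρ/2 + 1) * (n : ℝ) ^ ρ := by
        have he : Real.exp (1/12) * Real.exp (ρ/2 + 1) = Real.exp (1/12 + ρ/2 + 1) := by
          rw [← Real.exp_add]; congr 1; ring
        rw [← he]; ring
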